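/- (Interpolation transfer for equilibrium logic, CW version) Let α, β be formulas over a finite vocabulary, V' = V(β) ∖ V(α) = {B₁,…,Bₙ}. If α has an equilibrium model over V(α) ∪ V(β) and β is true in all such equilibrium models (α |~_cw β), then, assuming the interpolation theorem for HT, there exists a formula γ with V(γ) ⊆ V(α) ∩ V(β) such that every equilibrium model of α satisfies γ, and γ ∧ ¬B₁ ∧ … ∧ ¬Bₙ ⊨_HT β. -/
import Mathlib


/-- Propositional formulas over atoms ℕ. -/
inductive Fm where
  | atom : ℕ → Fm
  | bot  : Fm
  | and  : Fm → Fm → Fm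
  | or   : Fm → Fm → Fm
  | imp  : Fm → Fm → Fm
deriving DecidableEq

def Fm.neg (φ : Fm) : Fm := Fm.imp φ Fm.bot
def Fm.top : Fm := Fm.imp Fm.bot Fm.bot

/-- Truth at the "there" world (classical truth in T). -/
def satT (T : Set ℕ) : Fm → Prop
  | .atom a  => a ∈ T
  | .bot     => False
  | .and φ ψ => satT T φ ∧ satT T ψ
  | .or φ ψ  => satT T φ ∨ satT T ψ
  | .imp φ ψ => satT T φ → satT T ψ

/-- Truth at the "here" world of the HT-interpretation ⟨H,T⟩. -/
def satH (H T : Set ℕ) : Fm → Prop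
  | .atom a  => a ∈ H
  | .bot     => False
  | .and φ ψ => satH H T φ ∧ satH H T ψ
  | .or φ ψ  => satH H T φ ∨ satH H T ψ
  | .imp φ ψ => (satH H T φ → satH H T ψ) ∧ (satT T φ → satT T ψ)

/-- ⟨H,T⟩ is an HT-model of φ (true at both worlds). -/
def htSat (H T : Set ℕ) (φ : Fm) : Prop := satH H T φ ∧ satT T φ

/-- ⟨H,T⟩ is an HT-model of the theory Γ. -/
def htSatTh (H T : Set ℕ) (Γ : Set Fm) : Prop := ∀ φ ∈ Γ, htSat H T φ

/-- Atoms occurring in a formula. -/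
def vars : Fm → Finset ℕ
  | .atom a  => {a}
  | .bot     => ∅
  | .and φ ψ => vars φ ∪ vars ψ
  | .or φ ψ  => vars φ ∪ vars ψ
  | .imp φ ψ => vars φ ∪ vars ψ

/-- Atoms occurring in a theory. -/
def varsTh (Γ : Set Fm) : Set ℕ := ⋃ φ ∈ Γ, (vars φ : Set ℕ)

/-- HT-consequence: every world of every HT-interpretation making all of Γ true makes φ true. -/
def htConseqTh (Γ : Set Fm) (φ : Fm) : Prop :=
  ∀ H T : Set ℕ, H ⊆ T →
    ((∀ ψ ∈ Γ, satH H T ψ) → satH H T φ) ∧ ((∀ ψ ∈ Γ, satT T ψ) → satT T φ)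

/-- ⟨T,T⟩ is an equilibrium model of Γ over vocabulary V. -/
def eqModel (V : Set ℕ) (Γ : Set Fm) (T : Set ℕ) : Prop :=
  T ⊆ V ∧ htSatTh T T Γ ∧ ∀ H : Set ℕ, H ⊆ T → H ≠ T → ¬ htSatTh H T Γ

def bigAnd (l : List Fm) : Fm := l.foldr Fm.and Fm.top
def bigOr (l : List Fm) : Fm := l.foldr Fm.or Fm.bot
noncomputable def conjAtoms (s : Finset ℕ) : Fm := bigAnd (s.toList.map Fm.atom)
noncomputable def disjAtoms (s : Finset ℕ) : Fm := bigOr (s.toList.map Fm.atom)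
/-- δ_T over vocabulary V : (⋀_{a∈T} a) ∧ ¬(⋁_{a∈V∖T} a). -/
noncomputable def delta (V T : Finset ℕ) : Fm := Fm.and (conjAtoms T) (Fm.neg (disjAtoms (V \ T)))
lemma satT_congr (φ : Fm) {T₁ T₂ : Set ℕ} (h : ∀ a ∈ vars φ, (a ∈ T₁ ↔ a ∈ T₂)) :
    satT T₁ φ ↔ satT T₂ φ := by
  induction φ with
  | atom a => exact h a (by simp [vars])
  | bot => exact Iff.rfl
  | and φ ψ ihφ ihψ =>
      simp only [satT]
      rw [ihφ (fun a ha => h a (by simp [vars, ha])), ihψ (fun a ha => h a (by simp [vars, ha]))]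
  | or φ ψ ihφ ihψ =>
      simp only [satT]
      rw [ihφ (fun a ha => h a (by simp [vars, ha])), ihψ (fun a ha => h a (by simp [vars, ha]))]
  | imp φ ψ ihφ ihψ =>
      simp only [satT]
      rw [ihφ (fun a ha => h a (by simp [vars, ha])), ihψ (fun a ha => h a (by simp [vars, ha]))]

lemma satH_congr (φ : Fm) {H₁ T₁ H₂ T₂ : Set ℕ}
    (hH : ∀ a ∈ vars φ, (a ∈ H₁ ↔ a ∈ H₂)) (hT : ∀ a ∈ vars φ, (a ∈ T₁ ↔ a ∈ T₂)) :
    satH H₁ T₁ φ ↔ satH H₂ T₂ φ := by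
  induction φ with
  | atom a => exact hH a (by simp [vars])
  | bot => exact Iff.rfl
  | and φ ψ ihφ ihψ =>
      simp only [satH]
      rw [ihφ (fun a ha => hH a (by simp [vars, ha])) (fun a ha => hT a (by simp [vars, ha])),
        ihψ (fun a ha => hH a (by simp [vars, ha])) (fun a ha => hT a (by simp [vars, ha]))]
  | or φ ψ ihφ ihψ =>
      simp only [satH]
      rw [ihφ (fun a ha => hH a (by simp [vars, ha])) (fun a ha => hT a (by simp [vars, ha])),
        ihψ (fun a ha => hH a (by simp [vars, ha])) (fun a ha => hT a (by simp [vars, ha]))]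
  | imp φ ψ ihφ ihψ =>
      simp only [satH]
      rw [ihφ (fun a ha => hH a (by simp [vars, ha])) (fun a ha => hT a (by simp [vars, ha])),
        ihψ (fun a ha => hH a (by simp [vars, ha])) (fun a ha => hT a (by simp [vars, ha])),
        satT_congr φ (fun a ha => hT a (by simp [vars, ha])),
        satT_congr ψ (fun a ha => hT a (by simp [vars, ha]))]

lemma satT_bigAnd {T : Set ℕ} {l : List Fm} : satT T (bigAnd l) ↔ ∀ φ ∈ l, satT T φ := by
  induction l with
  | nil => simp [bigAnd, satT, Fm.top]
  | cons a l ih => simp [bigAnd, satT, List.foldr] at ih ⊢; tauto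

lemma satH_bigAnd {H T : Set ℕ} {l : List Fm} : satH H T (bigAnd l) ↔ ∀ φ ∈ l, satH H T φ := by
  induction l with
  | nil => simp [bigAnd, satH, satT, Fm.top]
  | cons a l ih => simp [bigAnd, satH, List.foldr] at ih ⊢; tauto

lemma satT_bigOr {T : Set ℕ} {l : List Fm} : satT T (bigOr l) ↔ ∃ φ ∈ l, satT T φ := by
  induction l with
  | nil => simp [bigOr, satT]
  | cons a l ih =>
      have h : bigOr (a :: l) = Fm.or a (bigOr l) := rfl
      rw [h]; simp only [satT]; rw [ih]; simp

lemma satH_bigOr {H T : Set ℕ} {l : List Fm} : satH H T (bigOr l) ↔ ∃ φ ∈ l, satH H T φ := by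
  induction l with
  | nil => simp [bigOr, satH]
  | cons a l ih =>
      have h : bigOr (a :: l) = Fm.or a (bigOr l) := rfl
      rw [h]; simp only [satH]; rw [ih]; simp

lemma satT_conjAtoms {T : Set ℕ} {s : Finset ℕ} : satT T (conjAtoms s) ↔ ∀ a ∈ s, a ∈ T := by
  simp [conjAtoms, satT_bigAnd, satT]

lemma satH_conjAtoms {H T : Set ℕ} {s : Finset ℕ} : satH H T (conjAtoms s) ↔ ∀ a ∈ s, a ∈ H := by
  simp [conjAtoms, satH_bigAnd, satH]

lemma satT_disjAtoms {T : Set ℕ} {s : Finset ℕ} : satT T (disjAtoms s) ↔ ∃ a ∈ s, a ∈ T := by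
  simp [disjAtoms, satT_bigOr, satT]

lemma satH_disjAtoms {H T : Set ℕ} {s : Finset ℕ} : satH H T (disjAtoms s) ↔ ∃ a ∈ s, a ∈ H := by
  simp [disjAtoms, satH_bigOr, satH]

lemma vars_bigAnd {l : List Fm} {s : Finset ℕ} (h : ∀ φ ∈ l, vars φ ⊆ s) :
    vars (bigAnd l) ⊆ s := by
  induction l with
  | nil => simp [bigAnd, vars, Fm.top]
  | cons a l ih =>
      simp only [bigAnd, List.foldr] at ih ⊢
      simp only [vars, Finset.union_subset_iff]
      exact ⟨h a (by simp), ih (fun φ hφ => h φ (by simp [hφ]))⟩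

lemma vars_bigOr {l : List Fm} {s : Finset ℕ} (h : ∀ φ ∈ l, vars φ ⊆ s) :
    vars (bigOr l) ⊆ s := by
  induction l with
  | nil => simp [bigOr, vars]
  | cons a l ih =>
      simp only [bigOr, List.foldr] at ih ⊢
      simp only [vars, Finset.union_subset_iff]
      exact ⟨h a (by simp), ih (fun φ hφ => h φ (by simp [hφ]))⟩

lemma vars_conjAtoms {s : Finset ℕ} : vars (conjAtoms s) ⊆ s := by
  apply vars_bigAnd; intro φ hφ
  simp only [List.mem_map, Finset.mem_toList] at hφ
  obtain ⟨a, ha, rfl⟩ := hφ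
  simp [vars, Finset.singleton_subset_iff, ha]

lemma vars_disjAtoms {s : Finset ℕ} : vars (disjAtoms s) ⊆ s := by
  apply vars_bigOr; intro φ hφ
  simp only [List.mem_map, Finset.mem_toList] at hφ
  obtain ⟨a, ha, rfl⟩ := hφ
  simp [vars, Finset.singleton_subset_iff, ha]

lemma vars_delta {V S : Finset ℕ} (h : S ⊆ V) : vars (delta V S) ⊆ V := by
  simp only [delta, Fm.neg, vars, Finset.union_subset_iff]
  refine ⟨vars_conjAtoms.trans h, (vars_disjAtoms.trans ?_), by simp⟩
  exact (Finset.sdiff_subset)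

lemma eqModel_subset_varsα {α β : Fm} {T : Set ℕ}
    (h : eqModel ((vars α ∪ vars β : Finset ℕ) : Set ℕ) {α} T) : T ⊆ (vars α : Set ℕ) := by
  intro a haT
  by_contra ha
  obtain ⟨hTV, hsat, hmin⟩ := h
  apply hmin (T \ {a}) (Set.diff_subset) (by
    intro he
    rw [← he] at haT
    simp at haT)
  intro φ hφ
  obtain ⟨hsH, hsT⟩ := hsat φ hφ
  have hφα : φ = α := hφ
  refine ⟨?_, hsT⟩
  rw [satH_congr φ (H₂ := T) (T₂ := T) ?_ (fun _ _ => Iff.rfl)]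
  · exact hsH
  · intro b hb
    simp only [Set.mem_diff, Set.mem_singleton_iff]
    constructor
    · rintro ⟨h1, _⟩; exact h1
    · intro hbT
      refine ⟨hbT, fun hba => ha ?_⟩
      rw [← hφα]; exact hba ▸ hb

/-- interpolation transfer for closed-world equilibrium entailment. -/
theorem cw_interpolation (α β : Fm)
    (hcoh : ∃ T : Set ℕ, eqModel ((vars α ∪ vars β : Finset ℕ) : Set ℕ) {α} T)
    (hcw : ∀ T : Set ℕ, eqModel ((vars α ∪ vars β : Finset ℕ) : Set ℕ) {α} T → htSat T T β)
    (hinterp : ∀ φ ψ : Fm, htConseqTh {φ} ψ →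
      ∃ ξ : Fm, vars ξ ⊆ vars φ ∩ vars ψ ∧ htConseqTh {φ} ξ ∧ htConseqTh {ξ} ψ) :
    ∃ γ : Fm, vars γ ⊆ vars α ∩ vars β ∧
      (∀ T : Set ℕ, eqModel ((vars α ∪ vars β : Finset ℕ) : Set ℕ) {α} T → htSat T T γ) ∧
      htConseqTh
        {Fm.and γ (bigAnd (((vars β \ vars α : Finset ℕ)).toList.map
          (fun a => Fm.neg (Fm.atom a))))} β := by
  classical
  set A : Finset ℕ := vars α with hA
  set Bv : Finset ℕ := vars β with hBv
  set V : Finset ℕ := A ∩ Bv with hV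
  set EqS : Finset (Finset ℕ) := A.powerset.filter
    (fun S => eqModel ((A ∪ Bv : Finset ℕ) : Set ℕ) {α} (S : Set ℕ)) with hEqS
  refine ⟨bigOr (EqS.toList.map (fun S => delta V (S ∩ V))), ?_, ?_, ?_⟩
  · -- vars
    apply vars_bigOr
    intro φ hφ
    simp only [List.mem_map, Finset.mem_toList] at hφ
    obtain ⟨S, _, rfl⟩ := hφ
    exact vars_delta Finset.inter_subset_right
  · -- every equilibrium model satisfies γ
    intro T hT
    have hTA : T ⊆ (A : Set ℕ) := eqModel_subset_varsα hT
    set S : Finset ℕ := A.filter (· ∈ T) with hS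
    have hST : (S : Set ℕ) = T := by
      ext a
      simp only [hS, Finset.coe_filter, Set.mem_setOf_eq, Finset.mem_coe]
      exact ⟨fun h => h.2, fun h => ⟨hTA h, h⟩⟩
    have hSE : S ∈ EqS := by
      rw [hEqS, Finset.mem_filter, Finset.mem_powerset]
      exact ⟨Finset.filter_subset _ _, by rw [hST]; exact hT⟩
    have hmem : delta V (S ∩ V) ∈ EqS.toList.map (fun S => delta V (S ∩ V)) :=
      List.mem_map.2 ⟨S, Finset.mem_toList.2 hSE, rfl⟩
    have hNone : ∀ a ∈ V \ (S ∩ V), a ∉ T := by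
      intro a ha haT
      rw [Finset.mem_sdiff] at ha
      exact ha.2 (Finset.mem_inter.2 ⟨Finset.mem_filter.2 ⟨Finset.mem_of_mem_inter_left (hV ▸ ha.1), haT⟩, ha.1⟩)
    have hcj : ∀ a ∈ S ∩ V, a ∈ T := by
      intro a ha
      have : a ∈ (S : Set ℕ) := Finset.mem_coe.2 (Finset.mem_of_mem_inter_left ha)
      rwa [hST] at this
    constructor
    · rw [satH_bigOr]
      refine ⟨_, hmem, ?_, ?_⟩
      · exact satH_conjAtoms.2 hcj
      · refine ⟨fun h => ?_, fun h => ?_⟩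
        · obtain ⟨a, ha, haT⟩ := satH_disjAtoms.1 h
          exact hNone a ha haT
        · obtain ⟨a, ha, haT⟩ := satT_disjAtoms.1 h
          exact hNone a ha haT
    · rw [satT_bigOr]
      refine ⟨_, hmem, ?_, ?_⟩
      · exact satT_conjAtoms.2 hcj
      · intro h
        obtain ⟨a, ha, haT⟩ := satT_disjAtoms.1 h
        exact hNone a ha haT
  · -- the HT-consequence
    intro H T' hHT'
    constructor
    · intro hp
      obtain ⟨hγ, hΘ⟩ := hp _ rfl
      rw [satH_bigOr] at hγ
      obtain ⟨φ, hmem, hφ⟩ := hγ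
      simp only [List.mem_map, Finset.mem_toList] at hmem
      obtain ⟨S, hSE, rfl⟩ := hmem
      rw [hEqS, Finset.mem_filter, Finset.mem_powerset] at hSE
      obtain ⟨hSA, hSeq⟩ := hSE
      obtain ⟨hc, hn⟩ := hφ
      have hcH : ∀ a ∈ S ∩ V, a ∈ H := satH_conjAtoms.1 hc
      have hnT : ∀ a ∈ V \ (S ∩ V), a ∉ T' := by
        intro a ha haT
        exact hn.2 (satT_disjAtoms.2 ⟨a, ha, haT⟩)
      have hBT : ∀ a ∈ Bv \ A, a ∉ T' := by
        intro a ha haT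
        have := satH_bigAnd.1 hΘ (Fm.neg (Fm.atom a))
          (List.mem_map.2 ⟨a, Finset.mem_toList.2 ha, rfl⟩)
        exact this.2 haT
      have hagT : ∀ a ∈ vars β, (a ∈ T' ↔ a ∈ (S : Set ℕ)) := by
        intro a haB
        by_cases haA : a ∈ A
        · have haV : a ∈ V := Finset.mem_inter.2 ⟨haA, haB⟩
          by_cases haS : a ∈ S
          · simp only [Finset.mem_coe, haS, iff_true]
            exact hHT' (hcH a (Finset.mem_inter.2 ⟨haS, haV⟩))
          · have : a ∉ T' := hnT a (Finset.mem_sdiff.2 ⟨haV, fun h => haS (Finset.mem_of_mem_inter_left h)⟩)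
            simp [this, haS]
        · have : a ∉ T' := hBT a (Finset.mem_sdiff.2 ⟨haB, haA⟩)
          simp only [Finset.mem_coe]
          exact iff_of_false this (fun h => haA (hSA h))
      have hagH : ∀ a ∈ vars β, (a ∈ H ↔ a ∈ (S : Set ℕ)) := by
        intro a haB
        constructor
        · intro haH; exact (hagT a haB).1 (hHT' haH)
        · intro haS
          have haV : a ∈ V := Finset.mem_inter.2 ⟨hSA haS, haB⟩
          exact hcH a (Finset.mem_inter.2 ⟨haS, haV⟩)
      rw [satH_congr β hagH hagT]
      exact (hcw _ hSeq).1
    · intro hp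
      obtain ⟨hγ, hΘ⟩ := hp _ rfl
      rw [satT_bigOr] at hγ
      obtain ⟨φ, hmem, hφ⟩ := hγ
      simp only [List.mem_map, Finset.mem_toList] at hmem
      obtain ⟨S, hSE, rfl⟩ := hmem
      rw [hEqS, Finset.mem_filter, Finset.mem_powerset] at hSE
      obtain ⟨hSA, hSeq⟩ := hSE
      obtain ⟨hc, hn⟩ := hφ
      have hcT : ∀ a ∈ S ∩ V, a ∈ T' := satT_conjAtoms.1 hc
      have hnT : ∀ a ∈ V \ (S ∩ V), a ∉ T' := by
        intro a ha haT
        exact hn (satT_disjAtoms.2 ⟨a, ha, haT⟩)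
      have hBT : ∀ a ∈ Bv \ A, a ∉ T' := by
        intro a ha haT
        have := satT_bigAnd.1 hΘ (Fm.neg (Fm.atom a))
          (List.mem_map.2 ⟨a, Finset.mem_toList.2 ha, rfl⟩)
        exact this haT
      have hagT : ∀ a ∈ vars β, (a ∈ T' ↔ a ∈ (S : Set ℕ)) := by
        intro a haB
        by_cases haA : a ∈ A
        · have haV : a ∈ V := Finset.mem_inter.2 ⟨haA, haB⟩
          by_cases haS : a ∈ S
          · simp only [Finset.mem_coe, haS, iff_true]
            exact hcT a (Finset.mem_inter.2 ⟨haS, haV⟩)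
          · have : a ∉ T' := hnT a (Finset.mem_sdiff.2 ⟨haV, fun h => haS (Finset.mem_of_mem_inter_left h)⟩)
            simp [this, haS]
        · have : a ∉ T' := hBT a (Finset.mem_sdiff.2 ⟨haB, haA⟩)
          simp only [Finset.mem_coe]
          exact iff_of_false this (fun h => haA (hSA h))
      rw [satT_congr β hagT]
      exact (hcw _ hSeq).2
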